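/- For each t with 1 ≤ t ≤ K, the function f_t is monotone non-decreasing in each of its arguments r_{K-(t-1)},…,r_K ∈ {0,1} and b_{K-(t-1)},…,b_K ≥ 0. -/

import Mathlib

/-- The hard function `f_t` for the matroid lower bound. The arguments `r b : ℕ → ℕ`
give, for each class `i ∈ {1, …, K}`, the number `r i ∈ {0,1}` of red elements and the
number `b i` of blue elements of class `i` in the set (only indices
`K-(t-1), …, K` are relevant for `f_t`). With `b̂ i = min (b i) (2(K-i))`,
`m_t = (2t-1)!`, `δ_{t-1} = m_{t-1} - f_{t-1}(r; b̂)`, `d_t = 2(t-1) - b̂ (K-(t-1))`,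
`s_t = 1 - r (K-(t-1))`, and `a_t = 2 m_{t-1} s_t + δ_{t-1} (d_t - 1)`,
we have `f_1(r; b) = r K` and `f_t(r; b) = m_t - a_t * d_t` for `t ≥ 2`. -/
def fMat (K : ℕ) : ℕ → (ℕ → ℕ) → (ℕ → ℕ) → ℤ
  | 0, _, _ => 0
  | 1, r, _ => (r K : ℤ)
  | (t + 2), r, b =>
    let bh : ℕ → ℕ := fun i => min (b i) (2 * (K - i))
    let δ : ℤ := (Nat.factorial (2 * (t + 1) - 1) : ℤ) - fMat K (t + 1) r bh
    let d : ℤ := 2 * ((t : ℤ) + 1) - (bh (K - (t + 1)) : ℤ)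
    let s : ℤ := 1 - (r (K - (t + 1)) : ℤ)
    (Nat.factorial (2 * (t + 2) - 1) : ℤ) -
      (2 * (Nat.factorial (2 * (t + 1) - 1) : ℤ) * s + δ * (d - 1)) * d

/-- Purely arithmetic fact: `a_t · d_t ≥ 0`. -/
theorem fMat_key0 (m δ d s : ℤ) (hm : 0 ≤ m) (hδ : 0 ≤ δ) (hd : 0 ≤ d) (hs : 0 ≤ s) :
    0 ≤ (2 * m * s + δ * (d - 1)) * d := by
  have h1 : (0 : ℤ) ≤ (d - 1) * d := by
    rcases hd.lt_or_eq with h | h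
    · have : (1 : ℤ) ≤ d := h
      nlinarith
    · nlinarith
  nlinarith [mul_nonneg hδ h1, mul_nonneg (mul_nonneg hm hs) hd]

/-- Purely arithmetic fact: `a_t · d_t` is monotone decreasing in the inputs. -/
theorem fMat_key (m δ δ' d d' s s' : ℤ) (hm : 0 ≤ m) (hδ0 : 0 ≤ δ') (hδ : δ' ≤ δ)
    (hd0 : 0 ≤ d') (hd : d' ≤ d) (hs0 : 0 ≤ s') (hs : s' ≤ s) :
    (2 * m * s' + δ' * (d' - 1)) * d' ≤ (2 * m * s + δ * (d - 1)) * d := by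
  have hd1 : (0 : ℤ) ≤ d := le_trans hd0 hd
  have h1 : (0 : ℤ) ≤ (d - 1) * d := by
    rcases hd1.lt_or_eq with h | h
    · have : (1 : ℤ) ≤ d := h
      nlinarith
    · nlinarith
  have h2 : (0 : ℤ) ≤ (d - d') * (d + d' - 1) := by
    rcases hd.lt_or_eq with h | h
    · have : d' + 1 ≤ d := h
      nlinarith
    · rw [h]; nlinarith
  nlinarith [mul_nonneg hδ0 h2, mul_nonneg (sub_nonneg.2 hδ) h1,
    mul_nonneg (mul_nonneg hm (sub_nonneg.2 hs)) hd1,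
    mul_nonneg (mul_nonneg hm hs0) (sub_nonneg.2 hd)]

theorem fMat_le (K : ℕ) : ∀ t, 1 ≤ t → t ≤ K → ∀ r b : ℕ → ℕ, (∀ i, r i ≤ 1) →
    fMat K t r b ≤ (Nat.factorial (2 * t - 1) : ℤ)
  | 0, h, _, _, _, _ => by omega
  | 1, _, _, r, b, hr => by
    have := hr K
    simp only [fMat]
    norm_num [Nat.factorial]
    exact_mod_cast this
  | (t + 2), _, htK, r, b, hr => by
    have ih := fMat_le K (t + 1) (by omega) (by omega) r
      (fun i => min (b i) (2 * (K - i))) hr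
    simp only [fMat]
    have hm : (0 : ℤ) ≤ (Nat.factorial (2 * (t + 1) - 1) : ℤ) := by positivity
    have hδ : (0 : ℤ) ≤ (Nat.factorial (2 * (t + 1) - 1) : ℤ) -
        fMat K (t + 1) r (fun i => min (b i) (2 * (K - i))) := by linarith
    have hnat : min (b (K - (t + 1))) (2 * (K - (K - (t + 1)))) ≤ 2 * (t + 1) := by omega
    have hd : (0 : ℤ) ≤ 2 * ((t : ℤ) + 1) -
        ((min (b (K - (t + 1))) (2 * (K - (K - (t + 1)))) : ℕ) : ℤ) := by
      have : ((min (b (K - (t + 1))) (2 * (K - (K - (t + 1)))) : ℕ) : ℤ) ≤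
          ((2 * (t + 1) : ℕ) : ℤ) := Nat.cast_le.2 hnat
      have h2 : ((2 * (t + 1) : ℕ) : ℤ) = 2 * ((t : ℤ) + 1) := by push_cast; ring
      linarith
    have hs : (0 : ℤ) ≤ 1 - (r (K - (t + 1)) : ℤ) := by
      have h := hr (K - (t + 1))
      have : ((r (K - (t + 1)) : ℕ) : ℤ) ≤ ((1 : ℕ) : ℤ) := Nat.cast_le.2 h
      push_cast at this
      linarith
    have key := fMat_key0 _ _ _ _ hm hδ hd hs
    linarith

theorem fMat_mono_aux (K : ℕ) : ∀ t, 1 ≤ t → t ≤ K → ∀ r r' b b' : ℕ → ℕ,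
    (∀ i, r i ≤ r' i) → (∀ i, r' i ≤ 1) → (∀ i, b i ≤ b' i) →
    fMat K t r b ≤ fMat K t r' b'
  | 0, h, _, _, _, _, _, _, _, _ => by omega
  | 1, _, _, r, r', b, b', hrr', _, _ => by
    simp only [fMat]
    exact_mod_cast hrr' K
  | (t + 2), _, htK, r, r', b, b', hrr', hr', hbb' => by
    have ih := fMat_mono_aux K (t + 1) (by omega) (by omega) r r'
      (fun i => min (b i) (2 * (K - i))) (fun i => min (b' i) (2 * (K - i)))
      hrr' hr' (fun i => by have := hbb' i; omega)
    have hub := fMat_le K (t + 1) (by omega) (by omega) r'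
      (fun i => min (b' i) (2 * (K - i))) hr'
    simp only [fMat]
    have hm : (0 : ℤ) ≤ (Nat.factorial (2 * (t + 1) - 1) : ℤ) := by positivity
    have hδ0 : (0 : ℤ) ≤ (Nat.factorial (2 * (t + 1) - 1) : ℤ) -
        fMat K (t + 1) r' (fun i => min (b' i) (2 * (K - i))) := by linarith
    have hδ : (Nat.factorial (2 * (t + 1) - 1) : ℤ) -
          fMat K (t + 1) r' (fun i => min (b' i) (2 * (K - i))) ≤
        (Nat.factorial (2 * (t + 1) - 1) : ℤ) -
          fMat K (t + 1) r (fun i => min (b i) (2 * (K - i))) := by linarith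
    have hnat : min (b' (K - (t + 1))) (2 * (K - (K - (t + 1)))) ≤ 2 * (t + 1) := by omega
    have hd0 : (0 : ℤ) ≤ 2 * ((t : ℤ) + 1) -
        ((min (b' (K - (t + 1))) (2 * (K - (K - (t + 1)))) : ℕ) : ℤ) := by
      have : ((min (b' (K - (t + 1))) (2 * (K - (K - (t + 1)))) : ℕ) : ℤ) ≤
          ((2 * (t + 1) : ℕ) : ℤ) := Nat.cast_le.2 hnat
      have h2 : ((2 * (t + 1) : ℕ) : ℤ) = 2 * ((t : ℤ) + 1) := by push_cast; ring
      linarith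
    have hdnat : min (b (K - (t + 1))) (2 * (K - (K - (t + 1)))) ≤
        min (b' (K - (t + 1))) (2 * (K - (K - (t + 1)))) := by
      have := hbb' (K - (t + 1)); omega
    have hd : 2 * ((t : ℤ) + 1) -
          ((min (b' (K - (t + 1))) (2 * (K - (K - (t + 1)))) : ℕ) : ℤ) ≤
        2 * ((t : ℤ) + 1) -
          ((min (b (K - (t + 1))) (2 * (K - (K - (t + 1)))) : ℕ) : ℤ) := by
      have := (Nat.cast_le (α := ℤ)).2 hdnat
      linarith
    have hs0 : (0 : ℤ) ≤ 1 - (r' (K - (t + 1)) : ℤ) := by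
      have h := hr' (K - (t + 1))
      have : ((r' (K - (t + 1)) : ℕ) : ℤ) ≤ ((1 : ℕ) : ℤ) := Nat.cast_le.2 h
      push_cast at this
      linarith
    have hs : 1 - ((r' (K - (t + 1)) : ℕ) : ℤ) ≤ 1 - ((r (K - (t + 1)) : ℕ) : ℤ) := by
      have := (Nat.cast_le (α := ℤ)).2 (hrr' (K - (t + 1)))
      linarith
    have key := fMat_key ((Nat.factorial (2 * (t + 1) - 1) : ℤ))
      ((Nat.factorial (2 * (t + 1) - 1) : ℤ) -
        fMat K (t + 1) r (fun i => min (b i) (2 * (K - i))))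
      ((Nat.factorial (2 * (t + 1) - 1) : ℤ) -
        fMat K (t + 1) r' (fun i => min (b' i) (2 * (K - i))))
      (2 * ((t : ℤ) + 1) - ((min (b (K - (t + 1))) (2 * (K - (K - (t + 1)))) : ℕ) : ℤ))
      (2 * ((t : ℤ) + 1) - ((min (b' (K - (t + 1))) (2 * (K - (K - (t + 1)))) : ℕ) : ℤ))
      (1 - ((r (K - (t + 1)) : ℕ) : ℤ)) (1 - ((r' (K - (t + 1)) : ℕ) : ℤ))
      hm hδ0 hδ hd0 hd hs0 hs
    linarith

theorem fMat_monotone (K t : ℕ) (ht1 : 1 ≤ t) (htK : t ≤ K)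
    (r r' b b' : ℕ → ℕ) (hrr' : ∀ i, r i ≤ r' i) (hr' : ∀ i, r' i ≤ 1)
    (hbb' : ∀ i, b i ≤ b' i) :
    fMat K t r b ≤ fMat K t r' b' :=
  fMat_mono_aux K t ht1 htK r r' b b' hrr' hr' hbb'
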